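/- The algebra WMQSym of weak multi-quasisymmetric functions, spanned by the monomial functions M_w with w ∈ W[m]×, is a Hopf subalgebra of ÑQSym[m]: it is closed under the deconcatenation coproduct, the counit, and the antipode. -/

import Mathlib

/-- `Ñ = ℕ ⊔ {ε}` modelled as `Option ℕ` (`none = ε`), with its addition. -/
def nadd : Option ℕ → Option ℕ → Option ℕ
  | none, none => none
  | none, some n => if n = 0 then none else some n
  | some n, none => if n = 0 then none else some n
  | some a, some b => some (a + b)

/-- The quasi-shuffle product of two words over an alphabet `C` with a binary
operation `op`, with values in the free `k`-module on words. -/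
noncomputable def qsh {k : Type*} [CommRing k] {C : Type*} (op : C → C → C) :
    List C → List C → (List C →₀ k)
  | [], y => Finsupp.single y 1
  | x, [] => Finsupp.single x 1
  | a :: x, b :: y =>
      (qsh op x (b :: y)).mapDomain (a :: ·) + (qsh op (a :: x) y).mapDomain (b :: ·) +
        (qsh op x y).mapDomain (op a b :: ·)
  termination_by x y => x.length + y.length
  decreasing_by all_goals simp [List.length_cons] <;> omega

/-- Compositions of `n`: lists of positive integers with sum `n`. -/
def Comps (n : ℕ) : Set (List ℕ) := {L | (∀ l ∈ L, 0 < l) ∧ L.sum = n}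

/-- `L ∘ 𝐛`: merge consecutive blocks of `𝐛` of sizes given by `L`, combining
the entries of each block with `op` (with neutral element `z`). -/
def blocksOf {C : Type*} (op : C → C → C) (z : C) : List ℕ → List C → List C
  | [], _ => []
  | l :: L, b => ((b.take l).foldr op z) :: blocksOf op z L (b.drop l)

/-- A multi-composition with exponents in `Ñ` is *weak* when every column takes
values in `P̃ = P ⊔ {ε}`, i.e. never takes the value `0 = some 0`. -/
def Weak {m : ℕ} (w : List (Fin m → Option ℕ)) : Prop :=
  ∀ c ∈ w, ∀ i, c i ≠ some 0


lemma nadd_ne {a : Option ℕ} (b : Option ℕ) (ha : a ≠ some 0) : nadd a b ≠ some 0 := by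
  cases a <;> cases b <;> simp_all [nadd] <;> omega

lemma weak_nil {m : ℕ} : Weak ([] : List (Fin m → Option ℕ)) := by
  intro c hc; simp at hc

lemma weak_cons {m : ℕ} {c : Fin m → Option ℕ} {x : List (Fin m → Option ℕ)}
    (hc : ∀ i, c i ≠ some 0) (hx : Weak x) : Weak (c :: x) := by
  intro d hd i
  rcases List.mem_cons.mp hd with h | h
  · exact h ▸ hc i
  · exact hx d h i

lemma weak_cons_iff {m : ℕ} {c : Fin m → Option ℕ} {x : List (Fin m → Option ℕ)} :
    Weak (c :: x) ↔ (∀ i, c i ≠ some 0) ∧ Weak x := by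
  constructor
  · intro h; exact ⟨h c (List.mem_cons_self), fun d hd i => h d (List.mem_cons_of_mem _ hd) i⟩
  · rintro ⟨hc, hx⟩; exact weak_cons hc hx

lemma qsh_weak {k : Type*} [CommRing k] {m : ℕ} :
    ∀ x y : List (Fin m → Option ℕ), Weak x → Weak y →
      ∀ z ∈ (qsh (k := k) (fun a b i => nadd (a i) (b i)) x y).support, Weak z
  | [], y => by
    intro hx hy z hz
    rw [qsh] at hz
    have := Finset.mem_singleton.mp (Finsupp.support_single_subset hz)
    subst this
    exact hy
  | a :: x, [] => by
    intro hx hy z hz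
    rw [qsh] at hz
    have := Finset.mem_singleton.mp (Finsupp.support_single_subset hz)
    subst this
    exact hx
    simp
  | a :: x, b :: y => by
    intro hx hy z hz
    rw [qsh] at hz
    have hz' := Finsupp.support_add hz
    rcases Finset.mem_union.mp hz' with hz'' | h3
    · rcases Finset.mem_union.mp (Finsupp.support_add hz'') with h1 | h2
      · rcases Finset.mem_image.mp (Finsupp.mapDomain_support h1) with ⟨w, hw, rfl⟩
        exact weak_cons (fun i => hx a (List.mem_cons_self) i)
          (qsh_weak x (b :: y) (fun d hd => hx d (List.mem_cons_of_mem _ hd)) hy w hw)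
      · rcases Finset.mem_image.mp (Finsupp.mapDomain_support h2) with ⟨w, hw, rfl⟩
        exact weak_cons (fun i => hy b (List.mem_cons_self) i)
          (qsh_weak (a :: x) y hx (fun d hd => hy d (List.mem_cons_of_mem _ hd)) w hw)
    · rcases Finset.mem_image.mp (Finsupp.mapDomain_support h3) with ⟨w, hw, rfl⟩
      exact weak_cons (fun i => nadd_ne _ (hx a (List.mem_cons_self) i))
        (qsh_weak x y (fun d hd => hx d (List.mem_cons_of_mem _ hd))
          (fun d hd => hy d (List.mem_cons_of_mem _ hd)) w hw)
  termination_by x y => x.length + y.length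
  decreasing_by all_goals simp [List.length_cons] <;> omega

lemma foldr_ne {m : ℕ} (c : Fin m → Option ℕ) (t : List (Fin m → Option ℕ))
    (hc : ∀ i, c i ≠ some 0) (i : Fin m) :
    (c :: t).foldr (fun a b j => nadd (a j) (b j)) (fun _ => some 0) i ≠ some 0 :=
  nadd_ne _ (hc i)

lemma blocks_weak {m : ℕ} :
    ∀ (L : List ℕ) (b : List (Fin m → Option ℕ)), (∀ l ∈ L, 0 < l) → L.sum = b.length →
      Weak b → Weak (blocksOf (fun a b i => nadd (a i) (b i)) (fun _ => some 0) L b) := by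
  intro L
  induction L with
  | nil => intro b _ _ _; exact weak_nil
  | cons l L ih =>
    intro b hpos hsum hb
    have hl : 0 < l := hpos l (List.mem_cons_self)
    have hsum' : l + L.sum = b.length := by simpa using hsum
    have hlen : l ≤ b.length := by omega
    rw [blocksOf]
    apply weak_cons
    · have hne : b.take l ≠ [] := by
        intro h
        have h2 := congrArg List.length h
        rw [List.length_take] at h2
        simp only [List.length_nil] at h2
        omega
      obtain ⟨c, t, htake⟩ := List.exists_cons_of_ne_nil hne
      have hc : ∀ i, c i ≠ some 0 := by
        intro i
        have hcb : c ∈ b := List.take_subset l b (by rw [htake]; exact List.mem_cons_self)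
        exact hb c hcb i
      rw [htake]
      exact foldr_ne c t hc
    · apply ih
      · intro l' hl'; exact hpos l' (List.mem_cons_of_mem _ hl')
      · simp only [List.length_drop]; omega
      · intro c hc i; exact hb c (List.drop_subset l b hc) i

/-- the algebra `WMQSym` of weak multi-quasisymmetric functions,
spanned by the `M_w` with `w ∈ W[m]ˣ` (weak multi-compositions), is a Hopf
subalgebra of `ÑQSym[m]`: it is closed under the quasi-shuffle product, under
the deconcatenation coproduct `Δ(M_w) = ∑ M_{(w_1,…,w_i)} ⊗ M_{(w_{i+1},…,w_n)}`,
under the counit, and under the antipode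
`S(M_w) = (−1)^{ℓ(w)} ∑_{L⊨ℓ(w)} M_{L∘w^r}` (all words appearing in these
expansions are again weak). -/
theorem stmt15 {k : Type*} [CommRing k] (m : ℕ) :
    (∀ x y : List (Fin m → Option ℕ), Weak x → Weak y →
      ∀ z ∈ (qsh (k := k) (fun a b i => nadd (a i) (b i)) x y).support, Weak z) ∧
    (∀ x : List (Fin m → Option ℕ), Weak x →
      ∀ i : ℕ, Weak (x.take i) ∧ Weak (x.drop i)) ∧
    (∀ x : List (Fin m → Option ℕ), Weak x →
      ∀ L ∈ Comps x.length,
        Weak (blocksOf (fun a b i => nadd (a i) (b i)) (fun _ => some 0)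
          L x.reverse)) := by
  refine ⟨fun x y hx hy => qsh_weak x y hx hy, ?_, ?_⟩
  · intro x hx i
    exact ⟨fun c hc j => hx c (List.take_subset i x hc) j,
           fun c hc j => hx c (List.drop_subset i x hc) j⟩
  · intro x hx L hL
    exact blocks_weak L x.reverse hL.1 (by simpa using hL.2)
      (fun c hc i => hx c (List.mem_reverse.mp hc) i)
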